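/- Let P_0, P_1, P_2, P_3, P_4 be a symmetric Clifford system on ℝ^{16} with P_0 P_1 P_2 P_3 P_4 = Id_{16}, and let x ∈ ℝ^{16} satisfy ‖x‖ = 1 and ⟨P_i x, x⟩ = 0 for all i = 0, …, 4. Then the ten vectors P_i P_j x, 0 ≤ i < j ≤ 4, form an orthonormal set in ℝ^{16} (and hence an orthonormal basis of the 10-dimensional tangent space of the focal submanifold M_+ at x). -/

import Mathlib

open Matrix

/-- For a symmetric Clifford system `P_0, …, P_4` on `ℝ^{16}` with
`P_0 P_1 P_2 P_3 P_4 = Id` and a point `x` of the focal submanifold `M₊`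
(`‖x‖ = 1` and `⟨P_i x, x⟩ = 0` for all `i`), the ten vectors `P_i P_j x`
(`i < j`) form an orthonormal set in `ℝ^{16}`. -/
theorem fkm_43_homogeneous_orthonormal_tangent_basis
    (P : Fin 5 → Matrix (Fin 16) (Fin 16) ℝ)
    (hsymm : ∀ i, (P i).IsSymm)
    (hcliff : ∀ i j, P i * P j + P j * P i =
      if i = j then (2 : Matrix (Fin 16) (Fin 16) ℝ) else 0)
    (hprod : P 0 * P 1 * P 2 * P 3 * P 4 = 1)
    (x : Fin 16 → ℝ) (hx : x ⬝ᵥ x = 1)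
    (hfocal : ∀ i, (P i).mulVec x ⬝ᵥ x = 0) :
    ∀ i j k n : Fin 5, i < j → k < n →
      ((P i * P j).mulVec x) ⬝ᵥ ((P k * P n).mulVec x) =
        if i = k ∧ j = n then 1 else 0 := by
  have h1 : ∀ a, P a * P a = 1 := by
    intro a
    have h := hcliff a a
    simp only [if_pos rfl] at h
    refine smul_right_injective (M := Matrix (Fin 16) (Fin 16) ℝ) (r := (2:ℝ)) two_ne_zero ?_
    show (2:ℝ) • (P a * P a) = (2:ℝ) • (1 : Matrix (Fin 16) (Fin 16) ℝ)
    rw [two_smul, two_smul, h]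
    norm_num
  have h2 : ∀ a b, a ≠ b → P a * P b = -(P b * P a) := by
    intro a b hab
    have h := hcliff a b
    rw [if_neg hab] at h
    exact eq_neg_of_add_eq_zero_left h
  have hsq : ∀ a (v : Fin 16 → ℝ), P a *ᵥ (P a *ᵥ v) = v := by
    intro a v
    rw [mulVec_mulVec, h1, one_mulVec]
  have hswap : ∀ a b, a ≠ b → ∀ (v : Fin 16 → ℝ),
      P a *ᵥ (P b *ᵥ v) = -(P b *ᵥ (P a *ᵥ v)) := by
    intro a b hab v
    rw [mulVec_mulVec, mulVec_mulVec, h2 a b hab, neg_mulVec]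
  have hswapLT : ∀ a b : Fin 5, b < a → ∀ (v : Fin 16 → ℝ),
      P a *ᵥ (P b *ᵥ v) = -(P b *ᵥ (P a *ᵥ v)) :=
    fun a b hab v => hswap a b (ne_of_gt hab) v
  have hmove : ∀ a (y z : Fin 16 → ℝ), (P a *ᵥ y) ⬝ᵥ z = y ⬝ᵥ (P a *ᵥ z) := by
    intro a y z
    rw [dotProduct_comm, dotProduct_mulVec, ← (hsymm a).eq, vecMul_transpose,
      dotProduct_comm, (hsymm a).eq]
  have hdot2 : ∀ a b : Fin 5, a ≠ b → (P a *ᵥ (P b *ᵥ x)) ⬝ᵥ x = 0 := by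
    intro a b hab
    have h : (P a *ᵥ (P b *ᵥ x)) ⬝ᵥ x = -((P a *ᵥ (P b *ᵥ x)) ⬝ᵥ x) := by
      calc (P a *ᵥ (P b *ᵥ x)) ⬝ᵥ x
          = (P b *ᵥ x) ⬝ᵥ (P a *ᵥ x) := hmove a _ _
        _ = x ⬝ᵥ (P b *ᵥ (P a *ᵥ x)) := hmove b _ _
        _ = -(x ⬝ᵥ (P a *ᵥ (P b *ᵥ x))) := by
            rw [hswap b a (Ne.symm hab), dotProduct_neg]
        _ = -((P a *ᵥ (P b *ᵥ x)) ⬝ᵥ x) := by rw [dotProduct_comm]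
    linarith
  have hfive : ∀ v : Fin 16 → ℝ,
      P 0 *ᵥ (P 1 *ᵥ (P 2 *ᵥ (P 3 *ᵥ (P 4 *ᵥ v)))) = v := by
    intro v
    rw [mulVec_mulVec, mulVec_mulVec, mulVec_mulVec, mulVec_mulVec, hprod, one_mulVec]
  -- the five sorted 4-fold products applied to x, dotted with x, vanish
  have q0123 : (P 0 *ᵥ (P 1 *ᵥ (P 2 *ᵥ (P 3 *ᵥ x)))) ⬝ᵥ x = 0 := by
    have h := hfive (P 4 *ᵥ x)
    simp only [hsq] at h
    rw [h]; exact hfocal 4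
  have q0124 : (P 0 *ᵥ (P 1 *ᵥ (P 2 *ᵥ (P 4 *ᵥ x)))) ⬝ᵥ x = 0 := by
    have h := hfive (P 4 *ᵥ (P 3 *ᵥ (P 4 *ᵥ x)))
    simp only [hsq] at h
    rw [h]
    simp only [hswapLT, hsq, mulVec_neg, neg_dotProduct, neg_neg, hfocal,
      neg_zero, Fin.reduceLT]
  have q0134 : (P 0 *ᵥ (P 1 *ᵥ (P 3 *ᵥ (P 4 *ᵥ x)))) ⬝ᵥ x = 0 := by
    have h := hfive (P 4 *ᵥ (P 3 *ᵥ (P 2 *ᵥ (P 3 *ᵥ (P 4 *ᵥ x)))))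
    simp only [hsq] at h
    rw [h]
    simp only [hswapLT, hsq, mulVec_neg, neg_dotProduct, neg_neg, hfocal,
      neg_zero, Fin.reduceLT]
  have q0234 : (P 0 *ᵥ (P 2 *ᵥ (P 3 *ᵥ (P 4 *ᵥ x)))) ⬝ᵥ x = 0 := by
    have h := hfive (P 4 *ᵥ (P 3 *ᵥ (P 2 *ᵥ (P 1 *ᵥ (P 2 *ᵥ (P 3 *ᵥ (P 4 *ᵥ x)))))))
    simp only [hsq] at h
    rw [h]
    simp only [hswapLT, hsq, mulVec_neg, neg_dotProduct, neg_neg, hfocal,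
      neg_zero, Fin.reduceLT]
  have q1234 : (P 1 *ᵥ (P 2 *ᵥ (P 3 *ᵥ (P 4 *ᵥ x)))) ⬝ᵥ x = 0 := by
    have h := congrArg (fun v => P 0 *ᵥ v) (hfive x)
    simp only [hsq] at h
    rw [h]; exact hfocal 0
  -- reduction of the goal to a nested `mulVec` expression
  have key : ∀ a b c d : Fin 5, ((P a * P b) *ᵥ x) ⬝ᵥ ((P c * P d) *ᵥ x)
      = (P b *ᵥ (P a *ᵥ (P c *ᵥ (P d *ᵥ x)))) ⬝ᵥ x := by
    intro a b c d
    rw [← mulVec_mulVec, ← mulVec_mulVec, hmove a, hmove b, dotProduct_comm]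
  intro i j k n hij hkn
  rw [key]
  by_cases hik : i = k
  · subst hik
    by_cases hjn : j = n
    · subst hjn
      simp only [hsq, hx, eq_self_iff_true, and_self, if_true]
    · rw [if_neg (fun h => hjn h.2)]
      conv_lhs => rw [hsq i]
      exact hdot2 j n hjn
  · rw [if_neg (fun h => hik h.1)]
    by_cases hjk : j = k
    · subst hjk
      rw [hswap i j (ne_of_lt hij), mulVec_neg, hsq, neg_dotProduct,
        hdot2 i n (ne_of_lt (lt_trans hij hkn)), neg_zero]
    · by_cases hjn : j = n
      · subst hjn
        rw [hswap k j (ne_of_lt hkn), mulVec_neg, mulVec_neg,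
          hswap i j (ne_of_lt hij), mulVec_neg, neg_neg, hsq]
        exact hdot2 i k hik
      · by_cases hin : i = n
        · subst hin
          rw [hswap k i (ne_of_lt hkn), mulVec_neg, hsq, mulVec_neg,
            neg_dotProduct, hdot2 j k (ne_of_gt (lt_trans hkn hij)), neg_zero]
        · -- all four indices distinct
          have hin' : n ≠ i := Ne.symm hin
          have fin5 : ∀ m : Fin 5, m = 0 ∨ m = 1 ∨ m = 2 ∨ m = 3 ∨ m = 4 := by decide
          rcases fin5 i with rfl|rfl|rfl|rfl|rfl <;>
            rcases fin5 j with rfl|rfl|rfl|rfl|rfl <;>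
            first
            | exact absurd hij (by decide)
            | (rcases fin5 k with rfl|rfl|rfl|rfl|rfl <;>
                rcases fin5 n with rfl|rfl|rfl|rfl|rfl <;>
                first
                | exact absurd hkn (by decide)
                | exact absurd rfl hik
                | exact absurd rfl hjk
                | exact absurd rfl hjn
                | exact absurd rfl hin
                | simp only [hswapLT, hsq, mulVec_neg, neg_dotProduct, neg_neg,
                    q0123, q0124, q0134, q0234, q1234, neg_zero, Fin.reduceLT])
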